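/- Fix an integer n ≥ 1 and set b := -n + i. For an integer s (viewed as a real Gaussian integer), T_n ∩ (T_n + s) ≠ ∅ if and only if s ∈ {-1, 0, 1}. That is, the set of real neighbours of the n-th fundamental tile T_n is {0, 1, -1}. -/

import Mathlib

open Complex Filter Pointwise

/-- `piSum b d = ∑_{j≥1} d_j b^{-j}` (0-indexed: `d j` is the `(j+1)`-st digit). -/
noncomputable def piSum (b : ℂ) (d : ℕ → ℤ) : ℂ :=
  ∑' j : ℕ, (d j : ℂ) * b ^ (-((j : ℤ) + 1))

/-- The `n`-th fundamental tile `T_n`. -/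
def fundTile (n : ℕ) : Set ℂ :=
  {z | ∃ d : ℕ → ℤ, (∀ j, 0 ≤ d j ∧ d j ≤ (n : ℤ) ^ 2) ∧
    z = piSum (-(n : ℂ) + Complex.I) d}

lemma summable_aux (b : ℂ) (hb : 1 < ‖b‖) (c : ℕ → ℤ) (B : ℝ)
    (hc : ∀ j, |(c j : ℝ)| ≤ B) :
    Summable fun j : ℕ => (c j : ℂ) * b ^ (-((j : ℤ) + 1)) := by
  have hb0 : b ≠ 0 := by intro h; simp [h] at hb; linarith
  have hr : ‖b‖⁻¹ < 1 := inv_lt_one_of_one_lt₀ hb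
  have hr0 : (0:ℝ) ≤ ‖b‖⁻¹ := by positivity
  apply Summable.of_norm_bounded (g := fun j => (B * ‖b‖⁻¹) * (‖b‖⁻¹) ^ j)
    (((summable_geometric_of_lt_one hr0 hr).mul_left _))
  intro j
  rw [norm_mul]
  have h1 : ‖b ^ (-((j : ℤ) + 1))‖ = (‖b‖⁻¹) ^ (j + 1) := by
    rw [norm_zpow, zpow_neg, ← inv_zpow]
    norm_cast
  rw [h1, pow_succ]
  have h2 : ‖((c j : ℂ))‖ = |(c j : ℝ)| := by
    rw [show ((c j : ℂ)) = (((c j : ℝ)) : ℂ) by push_cast; ring, Complex.norm_real]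
    simp [Real.norm_eq_abs]
  rw [h2]
  calc |(c j:ℝ)| * (‖b‖⁻¹ ^ j * ‖b‖⁻¹) ≤ B * (‖b‖⁻¹ ^ j * ‖b‖⁻¹) := by
        apply mul_le_mul_of_nonneg_right (hc j); positivity
    _ = B * ‖b‖⁻¹ * ‖b‖⁻¹ ^ j := by ring

lemma tail_norm_bound (b : ℂ) (hb : 1 < ‖b‖) (c : ℕ → ℤ) (B : ℝ)
    (hc : ∀ j, |(c j : ℝ)| ≤ B) :
    ‖∑' j : ℕ, (c j : ℂ) * b ^ (-((j : ℤ) + 1))‖ ≤ B / (‖b‖ - 1) := by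
  have hr : ‖b‖⁻¹ < 1 := inv_lt_one_of_one_lt₀ hb
  have hr0 : (0:ℝ) ≤ ‖b‖⁻¹ := by positivity
  have hB : (0:ℝ) ≤ B := le_trans (abs_nonneg _) (hc 0)
  have hgs : Summable fun j : ℕ => (B * ‖b‖⁻¹) * (‖b‖⁻¹) ^ j :=
    (summable_geometric_of_lt_one hr0 hr).mul_left _
  have hbound : ∀ j : ℕ, ‖(c j : ℂ) * b ^ (-((j : ℤ) + 1))‖ ≤ (B * ‖b‖⁻¹) * (‖b‖⁻¹) ^ j := by
    intro j
    rw [norm_mul, norm_zpow, zpow_neg, ← inv_zpow]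
    have h1 : (‖b‖⁻¹ : ℝ) ^ ((j:ℤ)+1) = (‖b‖⁻¹) ^ (j+1) := by norm_cast
    rw [h1, pow_succ]
    have h2 : ‖((c j : ℂ))‖ = |(c j : ℝ)| := by
      rw [show ((c j : ℂ)) = (((c j : ℝ)) : ℂ) by push_cast; ring, Complex.norm_real]
      simp [Real.norm_eq_abs]
    rw [h2]
    calc |(c j:ℝ)| * (‖b‖⁻¹ ^ j * ‖b‖⁻¹) ≤ B * (‖b‖⁻¹ ^ j * ‖b‖⁻¹) := by
          apply mul_le_mul_of_nonneg_right (hc j); positivity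
      _ = B * ‖b‖⁻¹ * ‖b‖⁻¹ ^ j := by ring
  have hf : Summable fun j : ℕ => ‖(c j : ℂ) * b ^ (-((j : ℤ) + 1))‖ :=
    Summable.of_nonneg_of_le (fun _ => norm_nonneg _) hbound hgs
  calc ‖∑' j : ℕ, (c j : ℂ) * b ^ (-((j : ℤ) + 1))‖
      ≤ ∑' j : ℕ, ‖(c j : ℂ) * b ^ (-((j : ℤ) + 1))‖ := norm_tsum_le_tsum_norm hf
    _ ≤ ∑' j : ℕ, (B * ‖b‖⁻¹) * (‖b‖⁻¹) ^ j := Summable.tsum_le_tsum hbound hf hgs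
    _ = B / (‖b‖ - 1) := by
        rw [tsum_mul_left, tsum_geometric_of_lt_one hr0 hr]
        have h1 : (0:ℝ) < ‖b‖ := by linarith
        have h3 : (1 - ‖b‖⁻¹) = (‖b‖ - 1) * ‖b‖⁻¹ := by
          rw [mul_comm, mul_sub, inv_mul_cancel₀ (ne_of_gt h1)]; ring
        rw [h3, mul_inv, inv_inv, div_eq_mul_inv, mul_comm (‖b‖-1)⁻¹ ‖b‖, ← mul_assoc,
          mul_assoc B ‖b‖⁻¹ ‖b‖, inv_mul_cancel₀ (ne_of_gt h1), mul_one]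

lemma rep_lemma (b : ℂ) (hb : 1 < ‖b‖) (c : ℕ → ℤ) (u : ℕ → ℂ) (C : ℝ) (s : ℂ)
    (hu0 : u 0 = s) (hrec : ∀ k, u (k + 1) = b * u k - c k) (hbd : ∀ k, ‖u k‖ ≤ C)
    (hsum : Summable fun j : ℕ => (c j : ℂ) * b ^ (-((j : ℤ) + 1))) :
    ∑' j : ℕ, (c j : ℂ) * b ^ (-((j : ℤ) + 1)) = s := by
  have hb0 : b ≠ 0 := by
    intro h; rw [h] at hb; simp at hb; linarith
  have hpart : ∀ k : ℕ, ∑ j ∈ Finset.range k, (c j : ℂ) * b ^ (-((j : ℤ) + 1))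
      = s - b ^ (-(k : ℤ)) * u k := by
    intro k
    induction k with
    | zero => simp [hu0]
    | succ k ih =>
      rw [Finset.sum_range_succ, ih, hrec k]
      have h1 : b ^ (-((k : ℤ) + 1)) * b = b ^ (-(k : ℤ)) := by
        rw [← zpow_add_one₀ hb0]; ring_nf
      push_cast
      rw [mul_sub, ← mul_assoc, h1]
      ring
  have hlim1 : Tendsto (fun k => ∑ j ∈ Finset.range k, (c j : ℂ) * b ^ (-((j : ℤ) + 1)))
      atTop (nhds (∑' j : ℕ, (c j : ℂ) * b ^ (-((j : ℤ) + 1)))) :=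
    hsum.hasSum.tendsto_sum_nat
  have hlim2 : Tendsto (fun k : ℕ => b ^ (-(k : ℤ)) * u k) atTop (nhds 0) := by
    apply squeeze_zero_norm (a := fun k : ℕ => C * (‖b‖⁻¹) ^ k)
    · intro k
      rw [norm_mul, norm_zpow, zpow_neg, ← inv_zpow]
      have : (‖b‖⁻¹ : ℝ) ^ (k : ℤ) = (‖b‖⁻¹) ^ k := by norm_cast
      rw [this, mul_comm]
      exact mul_le_mul_of_nonneg_right (hbd k) (by positivity)
    · have : Tendsto (fun k : ℕ => (‖b‖⁻¹) ^ k) atTop (nhds 0) :=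
        tendsto_pow_atTop_nhds_zero_of_lt_one (by positivity) (inv_lt_one_of_one_lt₀ hb)
      simpa using this.const_mul C
  have hlim3 : Tendsto (fun k => ∑ j ∈ Finset.range k, (c j : ℂ) * b ^ (-((j : ℤ) + 1)))
      atTop (nhds (s - 0)) := by
    simp only [hpart]
    exact Tendsto.const_sub s hlim2
  rw [sub_zero] at hlim3
  exact tendsto_nhds_unique hlim1 hlim3

lemma tail_rec (b : ℂ) (hb : 1 < ‖b‖) (c : ℕ → ℤ) (B : ℝ)
    (hc : ∀ j, |(c j : ℝ)| ≤ B) (k : ℕ) :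
    (∑' j : ℕ, ((c (j + (k + 1)) : ℂ) * b ^ (-((j : ℤ) + 1))))
      = b * (∑' j : ℕ, ((c (j + k) : ℂ) * b ^ (-((j : ℤ) + 1)))) - c k := by
  have hb0 : b ≠ 0 := by intro h; simp [h] at hb; linarith
  have hpt : ∀ j : ℕ, b * ((c (j + k) : ℂ) * b ^ (-((j : ℤ) + 1)))
      = (c (j + k) : ℂ) * b ^ (-(j : ℤ)) := by
    intro j
    have hzz : b * b ^ (-((j : ℤ) + 1)) = b ^ (-(j : ℤ)) := by
      rw [show (-(j : ℤ)) = 1 + (-((j : ℤ) + 1)) by ring, zpow_add₀ hb0, zpow_one]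
    calc b * ((c (j + k) : ℂ) * b ^ (-((j : ℤ) + 1)))
        = (c (j + k) : ℂ) * (b * b ^ (-((j : ℤ) + 1))) := by ring
      _ = (c (j + k) : ℂ) * b ^ (-(j : ℤ)) := by rw [hzz]
  have hsum : Summable fun j : ℕ => (c (j + k) : ℂ) * b ^ (-((j : ℤ) + 1)) :=
    summable_aux b hb _ B (fun j => hc _)
  have hg : Summable fun j : ℕ => (c (j + k) : ℂ) * b ^ (-(j : ℤ)) := by
    have := hsum.mul_left b
    apply this.congr
    intro j
    exact hpt j
  have h1 : b * (∑' j : ℕ, ((c (j + k) : ℂ) * b ^ (-((j : ℤ) + 1))))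
      = ∑' j : ℕ, (c (j + k) : ℂ) * b ^ (-(j : ℤ)) := by
    rw [← tsum_mul_left]
    exact tsum_congr hpt
  rw [h1, Summable.tsum_eq_zero_add hg]
  have h3 : ∀ j : ℕ, (c (j + 1 + k) : ℂ) * b ^ (-((j + 1 : ℕ) : ℤ))
      = (c (j + (k + 1)) : ℂ) * b ^ (-((j : ℤ) + 1)) := by
    intro j
    have e1 : j + 1 + k = j + (k + 1) := by omega
    rw [e1]
    norm_cast
  rw [tsum_congr h3]
  simp

set_option maxHeartbeats 2000000 in
lemma key_nonneg (n : ℤ) (hn : 1 ≤ n) (x y c : ℕ → ℤ)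
    (h0 : y 0 = 0)
    (hc : ∀ k, |c k| ≤ n ^ 2)
    (hxr : ∀ k, x (k + 1) = -n * x k - y k - c k)
    (hyr : ∀ k, y (k + 1) = x k - n * y k)
    (hbd : ∀ k, ((x k : ℝ) ^ 2 + (y k : ℝ) ^ 2) ≤ (n : ℝ) ^ 2 + 2 + 2 * Real.sqrt ((n : ℝ) ^ 2 + 1)) :
    |x 0| ≤ 1 := by
  have hn' : (1 : ℝ) ≤ (n : ℝ) := by exact_mod_cast hn
  have hsq : Real.sqrt ((n : ℝ) ^ 2 + 1) < (n : ℝ) + 1 :=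
    (Real.sqrt_lt' (by positivity)).mpr (by nlinarith)
  have hbd3 : ∀ k, x k ^ 2 + y k ^ 2 ≤ n ^ 2 + 2 * n + 3 := by
    intro k
    have h1 := hbd k
    have h2 : ((x k ^ 2 + y k ^ 2 : ℤ) : ℝ) < ((n ^ 2 + 2 * n + 4 : ℤ) : ℝ) := by
      push_cast; nlinarith
    have h3 : (x k ^ 2 + y k ^ 2 : ℤ) < (n ^ 2 + 2 * n + 4 : ℤ) := by exact_mod_cast h2
    omega
  have hy1 : y 1 = x 0 := by
    have h := hyr 0
    rw [h0, mul_zero, sub_zero] at h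
    simpa using h
  -- the maximum of |y k|
  have habs : ∀ k, |y k| ≤ n + 1 := by
    intro k
    by_contra h
    push_neg at h
    have h2 : n + 2 ≤ |y k| := by linarith
    nlinarith [_root_.sq_abs (y k), hbd3 k, sq_nonneg (x k), abs_nonneg (y k)]
  obtain ⟨k0, hk0⟩ : ∃ k0, ∀ k, (y k).natAbs ≤ (y k0).natAbs := by
    have hne : (Set.range fun k => (y k).natAbs).Nonempty := ⟨(y 0).natAbs, 0, rfl⟩
    have hbdd : BddAbove (Set.range fun k => (y k).natAbs) := by
      refine ⟨n.toNat + 1, ?_⟩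
      rintro m ⟨k, rfl⟩
      have h := habs k
      rw [Int.abs_eq_natAbs] at h
      simp only
      omega
    obtain ⟨k0, hk0⟩ := Nat.sSup_mem hne hbdd
    refine ⟨k0, fun k => ?_⟩
    have h := le_csSup hbdd ⟨k, rfl⟩
    simp only at h hk0
    omega
  have hmax : ∀ k, |y k| ≤ |y k0| := by
    intro k
    have := hk0 k
    rw [Int.abs_eq_natAbs, Int.abs_eq_natAbs]
    exact_mod_cast this
  -- |x k0| ≥ (n-1) * |y k0|
  have hx : x k0 = n * y k0 - (-(y (k0 + 1))) := by linarith [hyr k0]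
  have e2 : n * |y k0| - |y (k0 + 1)| ≤ |x k0| := by
    calc n * |y k0| - |y (k0 + 1)| = |n * y k0| - |-(y (k0 + 1))| := by
          rw [abs_mul, abs_of_nonneg (by omega : (0:ℤ) ≤ n), abs_neg]
      _ ≤ |n * y k0 - (-(y (k0 + 1)))| := abs_sub_abs_le_abs_sub _ _
      _ = |x k0| := by rw [← hx]
  have e3 : (n - 1) * |y k0| ≤ |x k0| := by
    have := hmax (k0 + 1)
    nlinarith [abs_nonneg (y k0)]
  have hM : |y k0| ≤ 1 → |x 0| ≤ 1 := by
    intro h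
    have h1 := hmax 1
    rw [hy1] at h1
    omega
  -- main split
  rcases eq_or_lt_of_le hn with h1 | h1'
  · -- n = 1, bound 5
    subst h1
    have hbd5 : ∀ k, x k ^ 2 + y k ^ 2 ≤ 5 := by
      intro k
      have hb := hbd k
      have hs2 : Real.sqrt 2 < 3 / 2 :=
        (Real.sqrt_lt' (by norm_num)).mpr (by norm_num)
      have h6 : ((x k ^ 2 + y k ^ 2 : ℤ) : ℝ) < ((6 : ℤ) : ℝ) := by
        push_cast at hb ⊢
        norm_num at hb
        nlinarith
      have h7 : (x k ^ 2 + y k ^ 2 : ℤ) < 6 := by exact_mod_cast h6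
      omega
    by_contra hcon
    push_neg at hcon
    have e1 : x 1 = -x 0 - c 0 := by
      have h := hxr 0
      simp [h0] at h
      linarith
    have e2 : y 2 = x 1 - y 1 := by
      have h := hyr 1
      norm_num at h
      linarith
    have e0 := hy1
    obtain ⟨hc0a, hc0b⟩ := abs_le.mp (by simpa using hc 0)
    have hb1 := hbd5 1
    have hb2 := hbd5 2
    rw [e0] at hb1
    rcases lt_abs.mp hcon with hp | hp
    · have hx02 : 4 ≤ x 0 ^ 2 := by nlinarith
      have hx1a : -1 ≤ x 1 := by nlinarith
      have hx1b : x 1 ≤ 1 := by nlinarith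
      have hy2 : y 2 = -3 := by omega
      rw [hy2] at hb2
      nlinarith [sq_nonneg (x 2)]
    · have hx02 : 4 ≤ x 0 ^ 2 := by nlinarith
      have hx1a : -1 ≤ x 1 := by nlinarith
      have hx1b : x 1 ≤ 1 := by nlinarith
      have hy2 : y 2 = 3 := by omega
      rw [hy2] at hb2
      nlinarith [sq_nonneg (x 2)]
  rcases eq_or_lt_of_le (by omega : (2:ℤ) ≤ n) with h2 | h2'
  · -- n = 2, bound 10
    subst h2
    have hbd10 : ∀ k, x k ^ 2 + y k ^ 2 ≤ 10 := by
      intro k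
      have hb := hbd k
      have hs2 : Real.sqrt 5 < 9 / 4 :=
        (Real.sqrt_lt' (by norm_num)).mpr (by norm_num)
      have h6 : ((x k ^ 2 + y k ^ 2 : ℤ) : ℝ) < ((11 : ℤ) : ℝ) := by
        push_cast at hb ⊢
        norm_num at hb
        nlinarith
      have h7 : (x k ^ 2 + y k ^ 2 : ℤ) < 11 := by exact_mod_cast h6
      omega
    by_contra hcon
    push_neg at hcon
    have e1 : x 1 = -2 * x 0 - c 0 := by
      have h := hxr 0
      simp [h0] at h
      linarith
    have e2 : y 2 = x 1 - 2 * y 1 := by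
      have h := hyr 1
      norm_num at h
      linarith
    have e0 := hy1
    obtain ⟨hc0a, hc0b⟩ := abs_le.mp (by simpa using hc 0)
    have hb1 := hbd10 1
    have hb2 := hbd10 2
    rw [e0] at hb1
    rcases lt_abs.mp hcon with hp | hp
    · have hx0b : x 0 ≤ 3 := by nlinarith [sq_nonneg (x 1)]
      by_cases hx03 : x 0 = 3
      · rw [hx03] at hb1
        have hx1a : -1 ≤ x 1 := by nlinarith
        omega
      · have hx02 : x 0 = 2 := by omega
        rw [hx02] at hb1
        have hx1a : -2 ≤ x 1 := by nlinarith
        have hy2 : y 2 ≤ -4 := by omega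
        nlinarith [sq_nonneg (x 2), sq_nonneg (y 2 + 4)]
    · have hx0b : -3 ≤ x 0 := by nlinarith [sq_nonneg (x 1)]
      by_cases hx03 : x 0 = -3
      · rw [hx03] at hb1
        have hx1a : x 1 ≤ 1 := by nlinarith
        omega
      · have hx02 : x 0 = -2 := by omega
        rw [hx02] at hb1
        have hx1a : x 1 ≤ 2 := by nlinarith
        have hy2 : 4 ≤ y 2 := by omega
        nlinarith [sq_nonneg (x 2), sq_nonneg (y 2 - 4)]
  · -- n ≥ 3
    have hn3 : (3 : ℤ) ≤ n := h2'
    apply hM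
    by_contra h
    push_neg at h
    have hm2 : 2 ≤ |y k0| := h
    have f1 : ((n - 1) * |y k0|) ^ 2 ≤ x k0 ^ 2 := by
      nlinarith [mul_le_mul e3 e3 (by nlinarith [abs_nonneg (y k0)]) (abs_nonneg (x k0)),
        _root_.sq_abs (x k0)]
    have f2 : (n ^ 2 - 2 * n + 2) * (y k0) ^ 2 ≤ n ^ 2 + 2 * n + 3 := by
      nlinarith [hbd3 k0, _root_.sq_abs (y k0)]
    have f3 : (4 : ℤ) ≤ (y k0) ^ 2 := by
      nlinarith [_root_.sq_abs (y k0), abs_nonneg (y k0)]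
    nlinarith [f2, f3, mul_le_mul_of_nonneg_left f3 (show (0:ℤ) ≤ n ^ 2 - 2 * n + 2 by nlinarith),
      mul_nonneg (show (0:ℤ) ≤ n - 3 by omega) (show (0:ℤ) ≤ 3 * n - 1 by omega)]

theorem stmt_1 (n : ℕ) (hn : 1 ≤ n) (s : ℤ) :
    (fundTile n ∩ (fundTile n + {(s : ℂ)})).Nonempty ↔ s ∈ ({-1, 0, 1} : Set ℤ) := by
  have hnR : (1 : ℝ) ≤ (n : ℝ) := by exact_mod_cast hn
  set b : ℂ := -(n : ℂ) + Complex.I with hbdef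
  have hb2 : ‖b‖ ^ 2 = (n : ℝ) ^ 2 + 1 := by
    rw [Complex.sq_norm, hbdef, Complex.normSq_apply]
    simp
    ring
  have hb1 : 1 < ‖b‖ := by nlinarith [norm_nonneg b]
  have hdig : ∀ (d : ℕ → ℤ), (∀ j, 0 ≤ d j ∧ d j ≤ (n : ℤ) ^ 2) →
      ∀ j, |(d j : ℝ)| ≤ (n : ℝ) ^ 2 := by
    intro d hd j
    have h1 := (hd j).1
    have h2 := (hd j).2
    have h3 : |d j| ≤ (n : ℤ) ^ 2 := abs_le.mpr ⟨by linarith, h2⟩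
    exact_mod_cast h3
  constructor
  · -- forward
    rintro ⟨z, hz1, hz2⟩
    obtain ⟨d, hd, hzd⟩ := hz1
    rw [Set.mem_add] at hz2
    obtain ⟨a, ha, w, hw, haw⟩ := hz2
    rw [Set.mem_singleton_iff] at hw
    subst hw
    obtain ⟨e, he, hae⟩ := ha
    set c : ℕ → ℤ := fun j => d j - e j with hcdef
    have hcZ : ∀ j, |c j| ≤ (n : ℤ) ^ 2 := by
      intro j
      have h1 := (hd j).1; have h2 := (hd j).2
      have h3 := (he j).1; have h4 := (he j).2
      exact abs_le.mpr ⟨by simp only [hcdef]; linarith, by simp only [hcdef]; linarith⟩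
    have hcB : ∀ j, |(c j : ℝ)| ≤ (n : ℝ) ^ 2 := by
      intro j; exact_mod_cast hcZ j
    set u : ℕ → ℂ := fun k => ∑' j : ℕ, ((c (j + k) : ℂ) * b ^ (-((j : ℤ) + 1))) with hudef
    have hu0 : u 0 = (s : ℂ) := by
      have hsd : Summable fun j : ℕ => (d j : ℂ) * b ^ (-((j : ℤ) + 1)) :=
        summable_aux b hb1 d ((n : ℝ) ^ 2) (hdig d hd)
      have hse : Summable fun j : ℕ => (e j : ℂ) * b ^ (-((j : ℤ) + 1)) :=
        summable_aux b hb1 e ((n : ℝ) ^ 2) (hdig e he)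
      have h1 : u 0 = piSum b d - piSum b e := by
        rw [hudef]
        simp only [Nat.add_zero]
        rw [piSum, piSum, ← Summable.tsum_sub hsd hse]
        apply tsum_congr
        intro j
        simp only [hcdef]
        push_cast
        ring
      rw [h1, ← hzd, ← hae]
      rw [← haw]
      ring
    have hurec : ∀ k, u (k + 1) = b * u k - c k := fun k => tail_rec b hb1 c _ hcB k
    have hubd : ∀ k, ‖u k‖ ≤ ‖b‖ + 1 := by
      intro k
      have h1 : ‖u k‖ ≤ (n : ℝ) ^ 2 / (‖b‖ - 1) :=
        tail_norm_bound b hb1 (fun j => c (j + k)) _ (fun j => hcB _)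
      have h2 : (n : ℝ) ^ 2 / (‖b‖ - 1) = ‖b‖ + 1 := by
        rw [div_eq_iff (by nlinarith : ‖b‖ - 1 ≠ 0)]
        nlinarith [hb2]
      rwa [h2] at h1
    set p : ℕ → ℤ × ℤ := fun k =>
      Nat.rec ((s : ℤ), (0 : ℤ))
        (fun k q => (-(n : ℤ) * q.1 - q.2 - c k, q.1 - (n : ℤ) * q.2)) k with hpdef
    have hpsx : ∀ k, (p (k + 1)).1 = -(n : ℤ) * (p k).1 - (p k).2 - c k := fun k => rfl
    have hpsy : ∀ k, (p (k + 1)).2 = (p k).1 - (n : ℤ) * (p k).2 := fun k => rfl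
    have hxy : ∀ k, u k = ((p k).1 : ℂ) + ((p k).2 : ℂ) * I := by
      intro k
      induction k with
      | zero =>
        rw [hu0]
        show (s : ℂ) = ((s : ℤ) : ℂ) + ((0 : ℤ) : ℂ) * I
        push_cast
        ring
      | succ k ih =>
        rw [hurec k, ih, hpsx k, hpsy k]
        have hI := Complex.I_sq
        push_cast
        rw [hbdef]
        linear_combination ((p k).2 : ℂ) * hI
    have hbd : ∀ k, (((p k).1 : ℝ) ^ 2 + ((p k).2 : ℝ) ^ 2)
        ≤ (n : ℝ) ^ 2 + 2 + 2 * Real.sqrt ((n : ℝ) ^ 2 + 1) := by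
      intro k
      have h2 : ‖u k‖ ^ 2 ≤ (‖b‖ + 1) ^ 2 := pow_le_pow_left₀ (norm_nonneg _) (hubd k) 2
      have h3 : ‖u k‖ ^ 2 = ((p k).1 : ℝ) ^ 2 + ((p k).2 : ℝ) ^ 2 := by
        rw [hxy k,
          show ((p k).1 : ℂ) = ((((p k).1 : ℝ)) : ℂ) by push_cast; rfl,
          show ((p k).2 : ℂ) = ((((p k).2 : ℝ)) : ℂ) by push_cast; rfl,
          Complex.norm_add_mul_I,
          Real.sq_sqrt (by positivity)]
      have hbeq : ‖b‖ = Real.sqrt ((n : ℝ) ^ 2 + 1) := by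
        rw [← hb2, Real.sqrt_sq (norm_nonneg b)]
      rw [h3] at h2
      nlinarith [h2, hb2, hbeq]
    have hkey := key_nonneg (n : ℤ) (by exact_mod_cast hn)
      (fun k => (p k).1) (fun k => (p k).2) c rfl hcZ hpsx hpsy hbd
    have hs1 : |s| ≤ 1 := hkey
    simp only [Set.mem_insert_iff, Set.mem_singleton_iff]
    rcases abs_le.mp hs1 with ⟨h1, h2⟩
    omega
  · -- backward
    intro hs
    have hmain : ∀ (c : ℕ → ℤ) (u : ℕ → ℂ) (C : ℝ), (∀ j, |c j| ≤ (n : ℤ) ^ 2) →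
        u 0 = (s : ℂ) → (∀ k, u (k + 1) = b * u k - c k) → (∀ k, ‖u k‖ ≤ C) →
        (fundTile n ∩ (fundTile n + {(s : ℂ)})).Nonempty := by
      intro c u C hc hu0 hrec hbd
      have hcB : ∀ j, |(c j : ℝ)| ≤ (n : ℝ) ^ 2 := fun j => by exact_mod_cast hc j
      have hsumc : Summable fun j : ℕ => (c j : ℂ) * b ^ (-((j : ℤ) + 1)) :=
        summable_aux b hb1 c _ hcB
      have hrep : ∑' j : ℕ, (c j : ℂ) * b ^ (-((j : ℤ) + 1)) = (s : ℂ) :=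
        rep_lemma b hb1 c u C (s : ℂ) hu0 hrec hbd hsumc
      set d : ℕ → ℤ := fun j => max (c j) 0 with hddef
      set e : ℕ → ℤ := fun j => max (-(c j)) 0 with hedef
      have hde : ∀ j, d j - e j = c j := by
        intro j
        simp only [hddef, hedef]
        rcases le_total (c j) 0 with h | h
        · rw [max_eq_right h, max_eq_left (by linarith)]; ring
        · rw [max_eq_left h, max_eq_right (by linarith)]; ring
      have hdb : ∀ j, 0 ≤ d j ∧ d j ≤ (n : ℤ) ^ 2 := by
        intro j
        refine ⟨le_max_right _ _, max_le ?_ (by positivity)⟩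
        have := abs_le.mp (hc j); linarith [this.2]
      have heb : ∀ j, 0 ≤ e j ∧ e j ≤ (n : ℤ) ^ 2 := by
        intro j
        refine ⟨le_max_right _ _, max_le ?_ (by positivity)⟩
        have := abs_le.mp (hc j); linarith [this.1]
      have hsd : Summable fun j : ℕ => (d j : ℂ) * b ^ (-((j : ℤ) + 1)) :=
        summable_aux b hb1 d ((n : ℝ) ^ 2) (hdig d hdb)
      have hse : Summable fun j : ℕ => (e j : ℂ) * b ^ (-((j : ℤ) + 1)) :=
        summable_aux b hb1 e ((n : ℝ) ^ 2) (hdig e heb)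
      have heq : piSum b d = piSum b e + (s : ℂ) := by
        have h1 : piSum b d - piSum b e = (s : ℂ) := by
          rw [piSum, piSum, ← Summable.tsum_sub hsd hse, ← hrep]
          apply tsum_congr
          intro j
          rw [← hde j]
          push_cast
          ring
        linear_combination h1
      refine ⟨piSum b d, ⟨d, hdb, rfl⟩, ?_⟩
      rw [Set.mem_add]
      exact ⟨piSum b e, ⟨e, heb, rfl⟩, (s : ℂ), Set.mem_singleton _, heq.symm⟩
    -- construct the period-1 data
    have hsqrt2 : Real.sqrt 2 ≤ 2 := by
      nlinarith [Real.sq_sqrt (by norm_num : (0:ℝ) ≤ 2), Real.sqrt_nonneg 2]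
    have hone : ∃ (c : ℕ → ℤ) (u : ℕ → ℂ) (C : ℝ), (∀ j, |c j| ≤ (n : ℤ) ^ 2) ∧
        u 0 = 1 ∧ (∀ k, u (k + 1) = b * u k - c k) ∧ (∀ k, ‖u k‖ ≤ C) := by
      have hnZ : (1 : ℤ) ≤ (n : ℤ) := by exact_mod_cast hn
      rcases eq_or_lt_of_le hn with h1 | h2
      · -- n = 1
        have hb1' : b = -1 + I := by rw [hbdef, ← h1]; norm_num
        refine ⟨fun j => if j % 3 = 0 then -1 else if j % 3 = 1 then 0 else 1,
          fun k => if k % 3 = 0 then 1 else if k % 3 = 1 then I else -1 - I, 2, ?_, ?_, ?_, ?_⟩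
        · intro j
          have : (1:ℤ) ≤ (n:ℤ)^2 := by nlinarith
          beta_reduce
          split_ifs <;> rw [abs_le] <;> constructor <;> linarith
        · simp
        · intro k
          have h3 : k % 3 = 0 ∧ (k+1) % 3 = 1 ∨ k % 3 = 1 ∧ (k+1) % 3 = 2 ∨
              k % 3 = 2 ∧ (k+1) % 3 = 0 := by omega
          rcases h3 with ⟨ha, hb'⟩ | ⟨ha, hb'⟩ | ⟨ha, hb'⟩ <;>
              simp only [ha, hb', hb1'] <;> norm_num
          · linear_combination (-1 : ℂ) * Complex.I_sq
          · linear_combination Complex.I_sq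
        · intro k
          beta_reduce
          split_ifs
          · norm_num
          · simp
          · have he : (-1 - I : ℂ) = ((-1 : ℝ) : ℂ) + ((-1:ℝ):ℂ) * I := by push_cast; ring
            rw [he, Complex.norm_add_mul_I,
              show ((-1:ℝ)^2 + (-1:ℝ)^2) = 2 by norm_num]
            exact hsqrt2
      · -- n ≥ 2
        have hn2 : (2:ℤ) ≤ (n:ℤ) := by exact_mod_cast h2
        refine ⟨fun j => if j % 4 = 0 then -2*(n:ℤ) else if j % 4 = 1 then -(n:ℤ)^2
            else if j % 4 = 2 then 2*(n:ℤ) else (n:ℤ)^2,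
          fun k => if k % 4 = 0 then 1 else if k % 4 = 1 then (n:ℂ) + I
            else if k % 4 = 2 then -1 else -(n:ℂ) - I,
          (n:ℝ) + 2, ?_, ?_, ?_, ?_⟩
        · intro j
          beta_reduce
          split_ifs <;> rw [abs_le] <;> constructor <;> nlinarith
        · simp
        · intro k
          have h4 : k % 4 = 0 ∧ (k+1) % 4 = 1 ∨ k % 4 = 1 ∧ (k+1) % 4 = 2 ∨
              k % 4 = 2 ∧ (k+1) % 4 = 3 ∨ k % 4 = 3 ∧ (k+1) % 4 = 0 := by omega
          rcases h4 with ⟨ha, hb'⟩ | ⟨ha, hb'⟩ | ⟨ha, hb'⟩ | ⟨ha, hb'⟩ <;>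
              simp only [ha, hb', hbdef] <;> push_cast
          · ring
          · linear_combination (-1 : ℂ) * Complex.I_sq
          · ring
          · linear_combination Complex.I_sq
        · intro k
          have hnn : (0:ℝ) ≤ (n:ℝ) := by positivity
          beta_reduce
          split_ifs
          · norm_num; linarith
          · calc ‖(n:ℂ) + I‖ ≤ ‖(n:ℂ)‖ + ‖I‖ := norm_add_le _ _
              _ ≤ (n:ℝ) + 2 := by simp
          · norm_num; linarith
          · calc ‖-(n:ℂ) - I‖ ≤ ‖-(n:ℂ)‖ + ‖I‖ := norm_sub_le _ _
              _ ≤ (n:ℝ) + 2 := by simp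
    simp only [Set.mem_insert_iff, Set.mem_singleton_iff] at hs
    obtain ⟨c, u, C, hc, hu0, hrec, hbd⟩ := hone
    rcases hs with rfl | rfl | rfl
    · exact hmain (fun j => -(c j)) (fun k => -(u k)) C
        (fun j => by rw [abs_neg]; exact hc j)
        (by show -u 0 = ((-1 : ℤ) : ℂ); rw [hu0]; push_cast; ring)
        (fun k => by show -u (k + 1) = b * -u k - ((-(c k) : ℤ) : ℂ); rw [hrec k]; push_cast; ring)
        (fun k => by show ‖-u k‖ ≤ C; rw [norm_neg]; exact hbd k)
    · exact hmain (fun _ => 0) (fun _ => 0) 0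
        (fun j => by simpa using (by positivity : (0:ℤ) ≤ (n:ℤ)^2))
        (by push_cast; simp)
        (fun k => by simp)
        (fun k => by simp)
    · exact hmain c u C hc (by rw [hu0]; norm_num) hrec hbd
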